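/- Let Γ1 be a set of formulas and Γ2 = Γ1 ∪ {u1 = u'1, u2 = u'2, u3 = u'3}, where for i = 1, 2, 3 the variable Var(u'_i) of u'_i does not occur in Γ1, u1, u2, u3, t, t', and Var(u'_1), Var(u'_2), Var(u'_3) are pairwise distinct variables. Then t ≡_{Γ2} t' implies t ≡_{Γ1} t'. -/

import Mathlib

namespace CLKID

/-- Terms of the language: variables, the constant `0`, and the unary function `s`. -/
inductive Tm : Type where
  | var : ℕ → Tm
  | zero : Tm
  | s : Tm → Tm
deriving DecidableEq

/-- `sIter n t` is the term `s^n t`. -/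
def sIter : ℕ → Tm → Tm
  | 0, t => t
  | n + 1, t => Tm.s (sIter n t)

/-- Substitution on terms. -/
def Tm.subst (θ : ℕ → Tm) : Tm → Tm
  | .var x => θ x
  | .zero => .zero
  | .s t => .s (t.subst θ)

/-- Free variables of a term. -/
def Tm.fv : Tm → Set ℕ
  | .var x => {x}
  | .zero => ∅
  | .s t => t.fv

/-- Subterms of a term. -/
def Tm.sub : Tm → Set Tm
  | .var x => {Tm.var x}
  | .zero => {Tm.zero}
  | .s t => insert (Tm.s t) t.sub

/-- The variable of a term (`none` if the term is of the form `s^n 0`). -/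
def Tm.varOf : Tm → Option ℕ
  | .var x => some x
  | .zero => none
  | .s t => t.varOf

/-- Formulas: equations, the two inductive-predicate atoms `Add1`/`Add2`,
    and the usual first-order connectives and quantifiers. -/
inductive Fm : Type where
  | eq : Tm → Tm → Fm
  | add1 : Tm → Tm → Tm → Fm
  | add2 : Tm → Tm → Tm → Fm
  | not : Fm → Fm
  | and : Fm → Fm → Fm
  | or : Fm → Fm → Fm
  | imp : Fm → Fm → Fm
  | all : ℕ → Fm → Fm
  | ex : ℕ → Fm → Fm
deriving DecidableEq

/-- Substitution on formulas. -/
def Fm.subst (θ : ℕ → Tm) : Fm → Fm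
  | .eq t u => .eq (t.subst θ) (u.subst θ)
  | .add1 a b c => .add1 (a.subst θ) (b.subst θ) (c.subst θ)
  | .add2 a b c => .add2 (a.subst θ) (b.subst θ) (c.subst θ)
  | .not φ => .not (φ.subst θ)
  | .and φ ψ => .and (φ.subst θ) (ψ.subst θ)
  | .or φ ψ => .or (φ.subst θ) (ψ.subst θ)
  | .imp φ ψ => .imp (φ.subst θ) (ψ.subst θ)
  | .all x φ => .all x (φ.subst (Function.update θ x (Tm.var x)))
  | .ex x φ => .ex x (φ.subst (Function.update θ x (Tm.var x)))

/-- Free variables of a formula. -/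
def Fm.fv : Fm → Set ℕ
  | .eq t u => t.fv ∪ u.fv
  | .add1 a b c => a.fv ∪ b.fv ∪ c.fv
  | .add2 a b c => a.fv ∪ b.fv ∪ c.fv
  | .not φ => φ.fv
  | .and φ ψ => φ.fv ∪ ψ.fv
  | .or φ ψ => φ.fv ∪ ψ.fv
  | .imp φ ψ => φ.fv ∪ ψ.fv
  | .all x φ => φ.fv \ {x}
  | .ex x φ => φ.fv \ {x}

/-- Terms occurring in a formula. -/
def Fm.tms : Fm → Set Tm
  | .eq t u => t.sub ∪ u.sub
  | .add1 a b c => a.sub ∪ b.sub ∪ c.sub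
  | .add2 a b c => a.sub ∪ b.sub ∪ c.sub
  | .not φ => φ.tms
  | .and φ ψ => φ.tms ∪ ψ.tms
  | .or φ ψ => φ.tms ∪ ψ.tms
  | .imp φ ψ => φ.tms ∪ ψ.tms
  | .all _ φ => φ.tms
  | .ex _ φ => φ.tms

/-- The substitution `[x := t]`. -/
def sub1 (x : ℕ) (t : Tm) : ℕ → Tm := fun y => if y = x then t else Tm.var y

/-- The simultaneous substitution `[v1 := t, v2 := u]`. -/
def sub2 (v1 v2 : ℕ) (t u : Tm) : ℕ → Tm :=
  fun z => if z = v1 then t else if z = v2 then u else Tm.var z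

/-- `≡_Γ`: the smallest congruence relation on terms containing all pairs `(t, u)`
    with the equation `t = u` in `Γ`. -/
inductive EqvTm (Γ : Set Fm) : Tm → Tm → Prop where
  | base {t u : Tm} : Fm.eq t u ∈ Γ → EqvTm Γ t u
  | refl (t : Tm) : EqvTm Γ t t
  | symm {t u : Tm} : EqvTm Γ t u → EqvTm Γ u t
  | trans {t u v : Tm} : EqvTm Γ t u → EqvTm Γ u v → EqvTm Γ t v
  | sCongr {t u : Tm} : EqvTm Γ t u → EqvTm Γ (Tm.s t) (Tm.s u)

/-- `t ~_Γ u` : `s^n t ≡_Γ s^m u` for some naturals `n`, `m`. -/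
def DepTm (Γ : Set Fm) (t u : Tm) : Prop := ∃ n m : ℕ, EqvTm Γ (sIter n t) (sIter m u)

/-- A sequent: a pair of finite sets of formulas. -/
structure Seq where
  ant : Finset Fm
  suc : Finset Fm

/-- The antecedent of a sequent, as a set of formulas. -/
def antSet (S : Seq) : Set Fm := ↑S.ant

/-- `[Γ]` from Lemma on chains: `{ s^n t1 = s^n t2 | t1 = t2 ∈ Γ or t2 = t1 ∈ Γ }`. -/
def brkt (Γ : Set Fm) : Set Fm :=
  {φ | ∃ (n : ℕ) (t1 t2 : Tm), φ = Fm.eq (sIter n t1) (sIter n t2) ∧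
        (Fm.eq t1 t2 ∈ Γ ∨ Fm.eq t2 t1 ∈ Γ)}

/-- `B1(Γ ⊢ Δ)` : second arguments of `Add1` atoms in the consequent. -/
def B1 (S : Seq) : Set Tm := {b | ∃ a c, Fm.add1 a b c ∈ S.suc}

/-- `C(Γ ⊢ Δ)` : third arguments of `Add2` atoms in the antecedent
    or `Add1` atoms in the consequent. -/
def Cset (S : Seq) : Set Tm :=
  {c | (∃ a b, Fm.add2 a b c ∈ S.ant) ∨ (∃ a b, Fm.add1 a b c ∈ S.suc)}

/-- Index sequent. -/
def IndexSequent (S : Seq) : Prop :=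
  (∀ t ∈ B1 S, ∀ u ∈ Cset S, ¬ DepTm (antSet S) t u) ∧
  (∀ b ∈ B1 S, ∀ b' ∈ B1 S, ∀ n m : ℕ, EqvTm (antSet S) (sIter n b) (sIter m b') → n = m)

/-- Number of `s`'s at the top of a term. -/
def Tm.dist : Tm → ℕ
  | .s t => t.dist + 1
  | _ => 0

/-- The innermost non-`s` part of a term. -/
def Tm.base : Tm → Tm
  | .s t => t.base
  | t => t

lemma sIter_succ (n : ℕ) (x : Tm) : sIter (n + 1) x = Tm.s (sIter n x) := rfl

lemma dist_s (t : Tm) : (Tm.s t).dist = t.dist + 1 := rfl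

lemma base_s (t : Tm) : (Tm.s t).base = t.base := rfl

lemma eq_sIter (t : Tm) : t = sIter t.dist t.base := by
  induction t with
  | var x => rfl
  | zero => rfl
  | s t ih => rw [dist_s, base_s, sIter_succ]; exact congrArg Tm.s ih

lemma mem_fv_iff (t : Tm) (x : ℕ) : x ∈ t.fv ↔ t.base = Tm.var x := by
  induction t with
  | var y => simp [Tm.fv, Tm.base, eq_comm]
  | zero => simp [Tm.fv, Tm.base]
  | s t ih => simpa [Tm.fv, base_s] using ih

lemma varOf_eq_some_iff (t : Tm) (x : ℕ) : t.varOf = some x ↔ t.base = Tm.var x := by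
  induction t with
  | var y => simp [Tm.varOf, Tm.base]
  | zero => simp [Tm.varOf, Tm.base]
  | s t ih => simpa [Tm.varOf, base_s] using ih

section Fresh

variable (Γ1 : Set Fm) (w : Fin 3 → ℕ) (U : Fin 3 → Tm) (k : Fin 3 → ℕ)

/-- Which fresh variable (if any) occurs in `t`. -/
def idx (t : Tm) : Option (Fin 3) :=
  if t.base = Tm.var (w 0) then some 0
  else if t.base = Tm.var (w 1) then some 1
  else if t.base = Tm.var (w 2) then some 2
  else none

lemma idx_some (hw : Function.Injective w) {t : Tm} {i : Fin 3}
    (h : t.base = Tm.var (w i)) : idx w t = some i := by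
  unfold idx
  split_ifs with h0 h1 h2
  · rw [h] at h0; injection h0 with h0; exact congrArg some (hw h0).symm
  · rw [h] at h1; injection h1 with h1; exact congrArg some (hw h1).symm
  · rw [h] at h2; injection h2 with h2; exact congrArg some (hw h2).symm
  · exact absurd h (by fin_cases i <;> assumption)

lemma idx_none_iff {t : Tm} : idx w t = none ↔ ∀ i, t.base ≠ Tm.var (w i) := by
  constructor
  · intro h i
    unfold idx at h
    split_ifs at h with h0 h1 h2
    fin_cases i <;> assumption
  · intro h
    unfold idx
    split_ifs with h0 h1 h2
    · exact absurd h0 (h 0)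
    · exact absurd h1 (h 1)
    · exact absurd h2 (h 2)
    · rfl

lemma idx_s' (t : Tm) : idx w (Tm.s t) = idx w t := by
  rfl

/-- The auxiliary congruence. -/
def R (t u : Tm) : Prop :=
  (idx w t = none ∧ idx w u = none ∧ EqvTm Γ1 t u) ∨
  (∃ i, idx w t = some i ∧ idx w u = none ∧ k i ≤ t.dist ∧
      EqvTm Γ1 (sIter (t.dist - k i) (U i)) u) ∨
  (∃ j, idx w t = none ∧ idx w u = some j ∧ k j ≤ u.dist ∧
      EqvTm Γ1 t (sIter (u.dist - k j) (U j))) ∨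
  (∃ i j, idx w t = some i ∧ idx w u = some j ∧
      ((i = j ∧ t.dist = u.dist) ∨
       (k i ≤ t.dist ∧ k j ≤ u.dist ∧
        EqvTm Γ1 (sIter (t.dist - k i) (U i)) (sIter (u.dist - k j) (U j)))))

lemma R_refl (t : Tm) : R Γ1 w U k t t := by
  rcases h : idx w t with _ | i
  · exact Or.inl ⟨h, h, EqvTm.refl t⟩
  · exact Or.inr (Or.inr (Or.inr ⟨i, i, h, h, Or.inl ⟨rfl, rfl⟩⟩))

lemma R_symm {t u : Tm} (h : R Γ1 w U k t u) : R Γ1 w U k u t := by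
  rcases h with ⟨h1, h2, h3⟩ | ⟨i, h1, h2, h3, h4⟩ | ⟨j, h1, h2, h3, h4⟩ |
    ⟨i, j, h1, h2, (⟨he, h3⟩ | ⟨h3, h4, h5⟩)⟩
  · exact Or.inl ⟨h2, h1, h3.symm⟩
  · exact Or.inr (Or.inr (Or.inl ⟨i, h2, h1, h3, h4.symm⟩))
  · exact Or.inr (Or.inl ⟨j, h2, h1, h3, h4.symm⟩)
  · exact Or.inr (Or.inr (Or.inr ⟨j, i, h2, h1, Or.inl ⟨he.symm, h3.symm⟩⟩))
  · exact Or.inr (Or.inr (Or.inr ⟨j, i, h2, h1, Or.inr ⟨h4, h3, h5.symm⟩⟩))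

lemma R_trans {t u v : Tm} (h : R Γ1 w U k t u) (h' : R Γ1 w U k u v) :
    R Γ1 w U k t v := by
  rcases h with ⟨h1, h2, h3⟩ | ⟨i, h1, h2, h3, h4⟩ | ⟨j, h1, h2, h3, h4⟩ |
    ⟨i, j, h1, h2, hij⟩ <;>
  rcases h' with ⟨g1, g2, g3⟩ | ⟨i', g1, g2, g3, g4⟩ | ⟨j', g1, g2, g3, g4⟩ |
    ⟨i', j', g1, g2, hij'⟩
  -- t none, u none
  · exact Or.inl ⟨h1, g2, h3.trans g3⟩
  · rw [h2] at g1; cases g1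
  · exact Or.inr (Or.inr (Or.inl ⟨j', h1, g2, g3, h3.trans g4⟩))
  · rw [h2] at g1; cases g1
  -- t some i, u none
  · exact Or.inr (Or.inl ⟨i, h1, g2, h3, h4.trans g3⟩)
  · rw [h2] at g1; cases g1
  · exact Or.inr (Or.inr (Or.inr ⟨i, j', h1, g2, Or.inr ⟨h3, g3, h4.trans g4⟩⟩))
  · rw [h2] at g1; cases g1
  -- t none, u some j
  · rw [h2] at g1; cases g1
  · have hj : j = i' := by rw [h2] at g1; exact Option.some.inj g1
    rw [← hj] at g4
    exact Or.inl ⟨h1, g2, h4.trans g4⟩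
  · rw [h2] at g1; cases g1
  · have hj : j = i' := by rw [h2] at g1; exact Option.some.inj g1
    rw [← hj] at hij'
    rcases hij' with ⟨hjj, e⟩ | ⟨k1, k2, e⟩
    · rw [hjj, e] at h3 h4
      exact Or.inr (Or.inr (Or.inl ⟨j', h1, g2, h3, h4⟩))
    · exact Or.inr (Or.inr (Or.inl ⟨j', h1, g2, k2, h4.trans e⟩))
  -- t some i, u some j
  · rw [h2] at g1; cases g1
  · have hj : j = i' := by rw [h2] at g1; exact Option.some.inj g1
    rw [← hj] at g3 g4
    rcases hij with ⟨hij2, e⟩ | ⟨k1, k2, e⟩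
    · refine Or.inr (Or.inl ⟨i, h1, g2, ?_, ?_⟩)
      · rw [hij2, e]; exact g3
      · rw [hij2, e]; exact g4
    · exact Or.inr (Or.inl ⟨i, h1, g2, k1, e.trans g4⟩)
  · rw [h2] at g1; cases g1
  · have hj : j = i' := by rw [h2] at g1; exact Option.some.inj g1
    rw [← hj] at hij'
    rcases hij with ⟨hij2, e⟩ | ⟨k1, k2, e⟩
    · rcases hij' with ⟨hij3, e'⟩ | ⟨k1', k2', e'⟩
      · exact Or.inr (Or.inr (Or.inr ⟨i, j', h1, g2, Or.inl ⟨hij2.trans hij3, e.trans e'⟩⟩))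
      · refine Or.inr (Or.inr (Or.inr ⟨i, j', h1, g2, Or.inr ⟨?_, k2', ?_⟩⟩))
        · rw [hij2, e]; exact k1'
        · rw [hij2, e]; exact e'
    · rcases hij' with ⟨hij3, e'⟩ | ⟨k1', k2', e'⟩
      · refine Or.inr (Or.inr (Or.inr ⟨i, j', h1, g2, Or.inr ⟨k1, ?_, ?_⟩⟩))
        · rw [← hij3, ← e']; exact k2
        · rw [← hij3, ← e']; exact e
      · exact Or.inr (Or.inr (Or.inr ⟨i, j', h1, g2, Or.inr ⟨k1, k2', e.trans e'⟩⟩))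

lemma R_sCongr {t u : Tm} (h : R Γ1 w U k t u) : R Γ1 w U k (Tm.s t) (Tm.s u) := by
  have sub_succ : ∀ (a b : ℕ) (x : Tm), b ≤ a → sIter (a + 1 - b) x = Tm.s (sIter (a - b) x) := by
    intro a b x hb
    rw [show a + 1 - b = (a - b) + 1 by omega, sIter_succ]
  rcases h with ⟨h1, h2, h3⟩ | ⟨i, h1, h2, h3, h4⟩ | ⟨j, h1, h2, h3, h4⟩ |
    ⟨i, j, h1, h2, hij⟩
  · exact Or.inl ⟨(idx_s' w t).trans h1, (idx_s' w u).trans h2, h3.sCongr⟩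
  · refine Or.inr (Or.inl ⟨i, (idx_s' w t).trans h1, (idx_s' w u).trans h2, ?_, ?_⟩)
    · rw [dist_s]; omega
    · rw [dist_s, sub_succ _ _ _ h3]; exact h4.sCongr
  · refine Or.inr (Or.inr (Or.inl ⟨j, (idx_s' w t).trans h1, (idx_s' w u).trans h2, ?_, ?_⟩))
    · rw [dist_s]; omega
    · rw [dist_s, sub_succ _ _ _ h3]; exact h4.sCongr
  · refine Or.inr (Or.inr (Or.inr ⟨i, j, (idx_s' w t).trans h1, (idx_s' w u).trans h2, ?_⟩))
    rcases hij with ⟨he, e⟩ | ⟨k1, k2, e⟩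
    · exact Or.inl ⟨he, by rw [dist_s, dist_s, e]⟩
    · refine Or.inr ⟨by rw [dist_s]; omega, by rw [dist_s]; omega, ?_⟩
      rw [dist_s, dist_s, sub_succ _ _ _ k1, sub_succ _ _ _ k2]
      exact e.sCongr

lemma R_of_eqv {Γ2 : Set Fm} {t u : Tm}
    (hbase : ∀ a b : Tm, Fm.eq a b ∈ Γ2 → R Γ1 w U k a b)
    (h : EqvTm Γ2 t u) : R Γ1 w U k t u := by
  induction h with
  | base hm => exact hbase _ _ hm
  | refl t => exact R_refl Γ1 w U k t
  | symm _ ih => exact R_symm Γ1 w U k ih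
  | trans _ _ ih1 ih2 => exact R_trans Γ1 w U k ih1 ih2
  | sCongr _ ih => exact R_sCongr Γ1 w U k ih

end Fresh

/-- Adding equations `u_i = u'_i` whose right-hand sides are
    built on fresh, pairwise distinct variables does not create new equalities
    between old terms. -/
theorem eqv_right_asp (Γ1 : Set Fm) (u1 u2 u3 u1' u2' u3' t t' : Tm) (w1 w2 w3 : ℕ)
    (h1 : u1'.varOf = some w1) (h2 : u2'.varOf = some w2) (h3 : u3'.varOf = some w3)
    (hd12 : w1 ≠ w2) (hd13 : w1 ≠ w3) (hd23 : w2 ≠ w3)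
    (hfresh : ∀ w ∈ ({w1, w2, w3} : Set ℕ),
      (∀ φ ∈ Γ1, w ∉ Fm.fv φ) ∧
      w ∉ u1.fv ∧ w ∉ u2.fv ∧ w ∉ u3.fv ∧ w ∉ t.fv ∧ w ∉ t'.fv)
    (h : EqvTm (Γ1 ∪ {Fm.eq u1 u1', Fm.eq u2 u2', Fm.eq u3 u3'}) t t') :
    EqvTm Γ1 t t' := by
  set w : Fin 3 → ℕ := fun i => if i.val = 0 then w1 else if i.val = 1 then w2 else w3 with hwdef
  set U : Fin 3 → Tm := fun i => if i.val = 0 then u1 else if i.val = 1 then u2 else u3 with hUdef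
  set U' : Fin 3 → Tm := fun i => if i.val = 0 then u1' else if i.val = 1 then u2' else u3' with hU'def
  set k : Fin 3 → ℕ := fun i => (U' i).dist with hkdef
  have hw : Function.Injective w := by
    intro a b hab
    fin_cases a <;> fin_cases b <;>
      first
        | rfl
        | exact absurd hab hd12
        | exact absurd hab hd13
        | exact absurd hab hd23
        | exact absurd hab.symm hd12
        | exact absurd hab.symm hd13
        | exact absurd hab.symm hd23
  have hbase_eq : ∀ i : Fin 3, (U' i).base = Tm.var (w i) := by
    intro i
    fin_cases i
    · exact (varOf_eq_some_iff u1' w1).1 h1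
    · exact (varOf_eq_some_iff u2' w2).1 h2
    · exact (varOf_eq_some_iff u3' w3).1 h3
  have hfr : ∀ i : Fin 3, (∀ φ ∈ Γ1, w i ∉ φ.fv) ∧
      w i ∉ u1.fv ∧ w i ∉ u2.fv ∧ w i ∉ u3.fv ∧ w i ∉ t.fv ∧ w i ∉ t'.fv := by
    intro i
    refine hfresh (w i) ?_
    fin_cases i
    · exact Set.mem_insert _ _
    · exact Set.mem_insert_of_mem _ (Set.mem_insert _ _)
    · exact Set.mem_insert_of_mem _ (Set.mem_insert_of_mem _ rfl)
  have hidx_none : ∀ v : Tm, (∀ i : Fin 3, w i ∉ v.fv) → idx w v = none := by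
    intro v hv
    rw [idx_none_iff]
    intro i hc
    exact hv i ((mem_fv_iff v (w i)).2 hc)
  have hUfresh : ∀ i j : Fin 3, w j ∉ (U i).fv := by
    intro i j
    fin_cases i
    · exact (hfr j).2.1
    · exact (hfr j).2.2.1
    · exact (hfr j).2.2.2.1
  have key : ∀ i : Fin 3, R Γ1 w U k (U i) (U' i) := by
    intro i
    refine Or.inr (Or.inr (Or.inl ⟨i, hidx_none (U i) (hUfresh i), idx_some w hw (hbase_eq i),
      Nat.le_refl _, ?_⟩))
    have h0 : (U' i).dist - k i = 0 := Nat.sub_self _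
    rw [h0]
    have hU'eq : U' i = sIter (k i) (Tm.var (w i)) := by
      have := eq_sIter (U' i)
      rw [hbase_eq i] at this
      exact this
    exact EqvTm.refl _
  have hbase : ∀ a b : Tm,
      Fm.eq a b ∈ (Γ1 ∪ {Fm.eq u1 u1', Fm.eq u2 u2', Fm.eq u3 u3'} : Set Fm) →
      R Γ1 w U k a b := by
    intro a b hab
    rcases hab with hab | hab
    · refine Or.inl ⟨?_, ?_, EqvTm.base hab⟩
      · refine hidx_none a fun i hi => (hfr i).1 _ hab ?_
        simp [Fm.fv, hi]
      · refine hidx_none b fun i hi => (hfr i).1 _ hab ?_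
        simp [Fm.fv, hi]
    · simp only [Set.mem_insert_iff, Set.mem_singleton_iff] at hab
      rcases hab with hab | hab | hab <;>
        · injection hab with e1 e2
          subst e1; subst e2
          first
          | exact key 0
          | exact key 1
          | exact key 2
  have hR := R_of_eqv Γ1 w U k hbase h
  rcases hR with ⟨_, _, h3⟩ | ⟨i, hh1, _, _, _⟩ | ⟨j, _, hh2, _, _⟩ | ⟨i, j, hh1, _, _⟩
  · exact h3
  · rw [hidx_none t (fun i => (hfr i).2.2.2.2.1)] at hh1; cases hh1
  · rw [hidx_none t' (fun i => (hfr i).2.2.2.2.2)] at hh2; cases hh2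
  · rw [hidx_none t (fun i => (hfr i).2.2.2.2.1)] at hh1; cases hh1

end CLKID
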